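/- Let F be a subfield of ℝ containing ℚ and let β ∈ ℝ be transcendental over F. Then the family of real numbers (1/(1 + qβ))_{q∈ℚ} is linearly independent over F; that is, for any finite set of distinct rationals q₁,…,q_N and any f₁,…,f_N ∈ F, if Σ_{k=1}^N f_k/(1 + q_k β) = 0 then f₁ = ⋯ = f_N = 0. -/

import Mathlib

open Polynomial Finset

set_option maxHeartbeats 1000000
set_option synthInstance.maxHeartbeats 400000

theorem inv_one_add_rat_mul_linearIndependent
    (F : Subfield ℝ) (β : ℝ) (hβ : Transcendental F β)
    (N : ℕ) (q : Fin N → ℚ) (hq : Function.Injective q)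
    (f : Fin N → F)
    (hsum : ∑ k, (f k : ℝ) / (1 + (q k : ℝ) * β) = 0) :
    ∀ k, f k = 0 := by
  -- denominators are nonzero
  have hne : ∀ j, (1 + (q j : ℝ) * β) ≠ 0 := by
    intro j h
    by_cases h0 : q j = 0
    · simp [h0] at h
    · have hq0 : (q j : ℝ) ≠ 0 := by exact_mod_cast h0
      apply hβ
      refine ⟨X - C ((-(q j)⁻¹ : ℚ) : F), X_sub_C_ne_zero _, ?_⟩
      have hcast : ((((-(q j)⁻¹ : ℚ) : F)) : ℝ) = -(q j : ℝ)⁻¹ := by push_cast; ring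
      have hβval : β = -(q j : ℝ)⁻¹ := by field_simp; linarith [h]
      simp only [map_sub, aeval_X, aeval_C]
      show β - (((-(q j)⁻¹ : ℚ) : F) : ℝ) = 0
      rw [hcast, hβval, sub_self]
  set qF : Fin N → F := fun j => ((q j : ℚ) : F) with hqF
  have hcastF : ∀ j, ((qF j : F) : ℝ) = (q j : ℝ) := by
    intro j; simp [hqF]
  set P : Polynomial F := ∑ k, C (f k) * ∏ j ∈ univ.erase k, (C (qF j) * X + 1) with hP
  have halg : ∀ x : F, algebraMap F ℝ x = (x : ℝ) := fun _ => rfl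
  have haeval : aeval β P = ∑ k, (f k : ℝ) * ∏ j ∈ univ.erase k, ((q j : ℝ) * β + 1) := by
    simp [hP, halg, hcastF]
  have hP0 : P = 0 := by
    by_contra hPne
    apply hβ
    refine ⟨P, hPne, ?_⟩
    rw [haeval]
    have hterm : ∀ k : Fin N, (f k : ℝ) * ∏ j ∈ univ.erase k, ((q j : ℝ) * β + 1)
        = (∏ j, ((q j : ℝ) * β + 1)) * ((f k : ℝ) / (1 + (q k : ℝ) * β)) := by
      intro k
      rw [← Finset.mul_prod_erase univ _ (mem_univ k)]
      have := hne k
      have : (1 : ℝ) + β * (q k : ℝ) ≠ 0 := by rw [mul_comm]; exact hne k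
      field_simp
      simp only [mul_comm β]
      ring
    rw [Finset.sum_congr rfl (fun k _ => hterm k), ← Finset.mul_sum, hsum, mul_zero]
  -- now evaluate P at various points
  have heval : ∀ c : F, (0 : F) = ∑ k, f k * ∏ j ∈ univ.erase k, (qF j * c + 1) := by
    intro c
    have := congrArg (Polynomial.eval c) hP0
    simpa [hP, eval_finset_sum, eval_prod] using this.symm
  intro m
  by_cases hm : q m = 0
  · -- all other f_k vanish (their q_k ≠ 0), then eval at 0 gives f m = 0
    have hothers : ∀ k, k ≠ m → f k = 0 := by
      intro k hk
      have hqk : q k ≠ 0 := fun h => hk (hq (h.trans hm.symm))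
      have hc := heval (-(qF k)⁻¹)
      have hmain : ∀ j, j ≠ k → f j * ∏ i ∈ univ.erase j, (qF i * (-(qF k)⁻¹) + 1) = 0 := by
        intro j hj
        have hkmem : k ∈ univ.erase j := by simp [Ne.symm hj]
        rw [← Finset.mul_prod_erase _ _ hkmem]
        have hqkF : qF k ≠ 0 := by
          intro h
          apply hqk
          have := congrArg (Subtype.val) h
          simp [hqF] at this
          exact_mod_cast this
        have : qF k * (-(qF k)⁻¹) + 1 = 0 := by field_simp; norm_num
        rw [this]; ring
      rw [Finset.sum_eq_single k (fun j _ hj => hmain j hj) (by simp)] at hc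
      have hprodne : ∏ i ∈ univ.erase k, (qF i * (-(qF k)⁻¹) + 1) ≠ 0 := by
        apply Finset.prod_ne_zero_iff.mpr
        intro i hi
        intro h
        -- qF i * (-(qF k)⁻¹) + 1 = 0 means qF i = qF k, means q i = q k, contradiction i ≠ k
        have hik : i ≠ k := (Finset.mem_erase.mp hi).1
        have hqkF : qF k ≠ 0 := by
          intro h'
          apply hqk
          have := congrArg (Subtype.val) h'
          simp [hqF] at this
          exact_mod_cast this
        have : qF i = qF k := by field_simp at h; linarith [h] -- may fail, F not ordered... fix below
        apply hik
        apply hq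
        have := congrArg (Subtype.val) this
        simp [hqF] at this
        exact_mod_cast this
      rcases mul_eq_zero.mp hc.symm with h | h
      · exact h
      · exact absurd h hprodne
    have hc := heval 0
    simp at hc
    rw [Finset.sum_eq_single m (fun j _ hj => hothers j hj) (by simp)] at hc
    exact hc.symm
  · -- q m ≠ 0: same argument directly
    have hc := heval (-(qF m)⁻¹)
    have hqmF : qF m ≠ 0 := by
      intro h'
      apply hm
      have := congrArg (Subtype.val) h'
      simp [hqF] at this
      exact_mod_cast this
    have hmain : ∀ j, j ≠ m → f j * ∏ i ∈ univ.erase j, (qF i * (-(qF m)⁻¹) + 1) = 0 := by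
      intro j hj
      have hmmem : m ∈ univ.erase j := by simp [Ne.symm hj]
      rw [← Finset.mul_prod_erase _ _ hmmem]
      have : qF m * (-(qF m)⁻¹) + 1 = 0 := by field_simp; norm_num
      rw [this]; ring
    rw [Finset.sum_eq_single m (fun j _ hj => hmain j hj) (by simp)] at hc
    have hprodne : ∏ i ∈ univ.erase m, (qF i * (-(qF m)⁻¹) + 1) ≠ 0 := by
      apply Finset.prod_ne_zero_iff.mpr
      intro i hi h
      have him : i ≠ m := (Finset.mem_erase.mp hi).1
      have : qF i = qF m := by field_simp at h; linarith [h]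
      apply him
      apply hq
      have := congrArg (Subtype.val) this
      simp [hqF] at this
      exact_mod_cast this
    rcases mul_eq_zero.mp hc.symm with h | h
    · exact h
    · exact absurd h hprodne
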